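/- Let k be a natural number and let T'_k : B^k × B^(2^k) × B^k → Bool be defined by T'_k(x,y,z) = y(x ⊕ z), where ⊕ denotes bitwise XOR of k-bit strings and y ∈ B^(2^k) is viewed as a function B^k → Bool. Then the decomposition complexity of T'_k is at most 2k + 4·(∑_{d=0}^{⌊k/3⌋} C(k,d)), where C(k,d) denotes the binomial coefficient. -/

import Mathlib

set_option maxHeartbeats 1000000

/-- `BS k` is the set of binary strings of length `k`. -/
abbrev BS (k : ℕ) := Fin k → Bool

/-- The decomposition complexity of `T : B^p × B^q × B^r → M` is at most `n`. -/
def DecompBound {p q r : ℕ} {M : Type*} (T : BS p → BS q → BS r → M) (n : ℕ) : Prop :=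
  ∃ u v : ℕ, u + v ≤ n ∧
    ∃ (a : BS p → BS q → BS u) (b : BS q → BS r → BS v) (t : BS u → BS v → M),
      ∀ x y z, T x y z = t (a x y) (b y z)

namespace XorAux

open Finset

open Finset

variable {k : ℕ}

def bz (b : Bool) : ZMod 2 := if b then 1 else 0

def zb (a : ZMod 2) : Bool := decide (a = 1)

lemma zb_bz (b : Bool) : zb (bz b) = b := by cases b <;> rfl

lemma bz_xor (a b : Bool) : bz (xor a b) = bz a + bz b := by
  cases a <;> cases b <;> simp [bz] <;> decide

def supp (w : BS k) : Finset (Fin k) := univ.filter (fun i => w i = true)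

def chi (W : Finset (Fin k)) : BS k := fun i => decide (i ∈ W)

lemma chi_supp (w : BS k) : chi (supp w) = w := by
  funext i; simp [chi, supp]

lemma prod_bz (w : BS k) (S : Finset (Fin k)) :
    (∏ i ∈ S, bz (w i)) = if S ⊆ supp w then 1 else 0 := by
  by_cases h : S ⊆ supp w
  · rw [if_pos h]
    apply Finset.prod_eq_one
    intro i hi
    have hw : w i = true := by have := h hi; simpa [supp] using this
    simp [bz, hw]
  · rw [if_neg h]
    obtain ⟨i, hiS, hiw⟩ : ∃ i ∈ S, ¬ i ∈ supp w := by
      by_contra hc; push_neg at hc; exact h hc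
    apply Finset.prod_eq_zero hiS
    have hw : w i = false := by simpa [supp] using hiw
    simp [bz, hw]

def coeffs (g : Finset (Fin k) → ZMod 2) (S : Finset (Fin k)) : ZMod 2 :=
  ∑ T ∈ S.powerset, g T

lemma powerset_eq_filter (S : Finset (Fin k)) :
    S.powerset = univ.filter (fun A => A ⊆ S) := by
  ext A; simp

lemma inversion (g : Finset (Fin k) → ZMod 2) (W : Finset (Fin k)) :
    ∑ S ∈ W.powerset, coeffs g S = g W := by
  unfold coeffs
  have h1 : ∀ S ∈ W.powerset, (∑ T ∈ S.powerset, g T)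
      = ∑ T ∈ W.powerset, if T ⊆ S then g T else 0 := by
    intro S hS
    rw [Finset.sum_ite, Finset.sum_const_zero, add_zero]
    congr 1
    ext T
    simp only [mem_filter, mem_powerset]
    exact ⟨fun h => ⟨h.trans (mem_powerset.1 hS), h⟩, fun h => h.2⟩
  calc ∑ S ∈ W.powerset, ∑ T ∈ S.powerset, g T
      = ∑ S ∈ W.powerset, ∑ T ∈ W.powerset, if T ⊆ S then g T else 0 :=
        Finset.sum_congr rfl h1
    _ = ∑ T ∈ W.powerset, ∑ S ∈ W.powerset, if T ⊆ S then g T else 0 := Finset.sum_comm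
    _ = ∑ T ∈ W.powerset, (W.powerset.filter (fun S => T ⊆ S)).card • g T := by
        refine Finset.sum_congr rfl fun T _ => ?_
        rw [Finset.sum_ite, Finset.sum_const_zero, add_zero, Finset.sum_const]
    _ = g W := ?_
  rw [Finset.sum_eq_single W]
  · have : W.powerset.filter (fun S => W ⊆ S) = Finset.Icc W W := by
      rw [Finset.Icc_eq_filter_powerset]
    rw [this, Finset.Icc_self, Finset.card_singleton, one_smul]
  · intro T hT hTW
    have hTsub : T ⊆ W := mem_powerset.1 hT
    have : W.powerset.filter (fun S => T ⊆ S) = Finset.Icc T W := by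
      rw [Finset.Icc_eq_filter_powerset]
    rw [this, Finset.card_Icc_finset hTsub]
    have hlt : T.card < W.card := Finset.card_lt_card (lt_of_le_of_ne hTsub hTW)
    have hpos : W.card - T.card ≠ 0 := by omega
    rw [nsmul_eq_mul, Nat.cast_pow]
    have h2 : ((2 : ℕ) : ZMod 2) = 0 := by decide
    rw [h2, zero_pow hpos, zero_mul]
  · intro h
    exact absurd (Finset.mem_powerset_self W) h

lemma eval (g : Finset (Fin k) → ZMod 2) (w : BS k) :
    ∑ S : Finset (Fin k), coeffs g S * ∏ i ∈ S, bz (w i) = g (supp w) := by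
  have h1 : ∀ S : Finset (Fin k), coeffs g S * ∏ i ∈ S, bz (w i)
      = if S ⊆ supp w then coeffs g S else 0 := fun S => by
    rw [prod_bz]; split <;> simp
  rw [Finset.sum_congr rfl (fun S _ => h1 S), Finset.sum_ite, Finset.sum_const_zero, add_zero,
    ← powerset_eq_filter, inversion]

open Finset

variable {k : ℕ}

abbrev Sm (k : ℕ) := {B : Finset (Fin k) // 3 * B.card ≤ k}

def pairs (k : ℕ) : Finset (Finset (Fin k) × Finset (Fin k)) :=
  univ.filter (fun p => p.2 ⊆ p.1)

def alph (c : Finset (Fin k) → ZMod 2) (xv : Fin k → ZMod 2) (B : Finset (Fin k)) : ZMod 2 :=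
  ∑ p ∈ (pairs k).filter (fun p => 3 * p.1.card ≤ 2 * k ∧ p.1 \ p.2 = B),
    c p.1 * ∏ i ∈ p.2, xv i

def beth (c : Finset (Fin k) → ZMod 2) (zv : Fin k → ZMod 2) (A : Finset (Fin k)) : ZMod 2 :=
  ∑ p ∈ (pairs k).filter
      (fun p => 3 * p.1.card ≤ 2 * k ∧ ¬ (3 * (p.1 \ p.2).card ≤ k) ∧ p.2 = A),
    c p.1 * ∏ i ∈ p.1 \ p.2, zv i

lemma key (c : Finset (Fin k) → ZMod 2) (xv zv : Fin k → ZMod 2) :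
    ∑ S : Finset (Fin k), c S * ∏ i ∈ S, (xv i + zv i)
    = (∑ C : Sm k, if 2 * k < 3 * (C.valᶜ).card then
          c C.valᶜ * ∏ i ∈ C.valᶜ, (xv i + zv i) else 0)
      + ((∑ C : Sm k, (∏ i ∈ C.val, zv i) * alph c xv C.val)
        + (∑ C : Sm k, (∏ i ∈ C.val, xv i) * beth c zv C.val)) := by
  classical
  set F : Finset (Fin k) × Finset (Fin k) → ZMod 2 :=
    fun p => c p.1 * ((∏ i ∈ p.2, xv i) * ∏ i ∈ p.1 \ p.2, zv i) with hF
  rw [← Finset.sum_filter_add_sum_filter_not univ (fun S => 2 * k < 3 * S.card)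
      (fun S => c S * ∏ i ∈ S, (xv i + zv i))]
  congr 1
  -- HIGH part
  · refine Eq.symm ?_
    have hstep : ∀ B : Finset (Fin k),
        (if 3 * B.card ≤ k then
          (if 2 * k < 3 * (Bᶜ).card then c Bᶜ * ∏ i ∈ Bᶜ, (xv i + zv i) else 0) else 0)
        = (if 2 * k < 3 * (Bᶜ).card then c Bᶜ * ∏ i ∈ Bᶜ, (xv i + zv i) else 0) := by
      intro B
      by_cases h2 : 2 * k < 3 * (Bᶜ).card
      · have hcard : (Bᶜ).card = k - B.card := by
          rw [Finset.card_compl, Fintype.card_fin]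
        have hle : B.card ≤ k := by
          simpa using Finset.card_le_univ B
        have h3 : 3 * B.card ≤ k := by omega
        rw [if_pos h3]
      · simp [h2]
    have hsubty : (∑ C : Sm k, if 2 * k < 3 * (C.valᶜ).card then
          c C.valᶜ * ∏ i ∈ C.valᶜ, (xv i + zv i) else 0)
        = ∑ B ∈ univ.filter (fun B : Finset (Fin k) => 3 * B.card ≤ k),
            (if 2 * k < 3 * (Bᶜ).card then c Bᶜ * ∏ i ∈ Bᶜ, (xv i + zv i) else 0) :=
      (Finset.sum_subtype (p := fun B : Finset (Fin k) => 3 * B.card ≤ k) (univ.filter (fun B : Finset (Fin k) => 3 * B.card ≤ k)) (fun B => by simp) (fun B => if 2 * k < 3 * (Bᶜ).card then c Bᶜ * ∏ i ∈ Bᶜ, (xv i + zv i) else 0)).symm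
    calc (∑ C : Sm k, if 2 * k < 3 * (C.valᶜ).card then
          c C.valᶜ * ∏ i ∈ C.valᶜ, (xv i + zv i) else 0)
        = ∑ B ∈ univ.filter (fun B : Finset (Fin k) => 3 * B.card ≤ k),
            (if 2 * k < 3 * (Bᶜ).card then c Bᶜ * ∏ i ∈ Bᶜ, (xv i + zv i) else 0) := hsubty
      _ = ∑ B : Finset (Fin k), if 3 * B.card ≤ k then
            (if 2 * k < 3 * (Bᶜ).card then c Bᶜ * ∏ i ∈ Bᶜ, (xv i + zv i) else 0) else 0 :=
          Finset.sum_filter _ _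
      _ = ∑ B : Finset (Fin k),
            (if 2 * k < 3 * (Bᶜ).card then c Bᶜ * ∏ i ∈ Bᶜ, (xv i + zv i) else 0) :=
          Finset.sum_congr rfl (fun B _ => hstep B)
      _ = ∑ S : Finset (Fin k),
            (if 2 * k < 3 * S.card then c S * ∏ i ∈ S, (xv i + zv i) else 0) :=
          Fintype.sum_bijective compl (Function.Involutive.bijective compl_compl)
            _ _ (fun B => rfl)
      _ = ∑ S ∈ univ.filter (fun S : Finset (Fin k) => 2 * k < 3 * S.card),
            c S * ∏ i ∈ S, (xv i + zv i) := (Finset.sum_filter _ _).symm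
  -- LOW part
  · have h2 : (pairs k).filter (fun p => 3 * p.1.card ≤ 2 * k)
        = univ.filter (fun p : Finset (Fin k) × Finset (Fin k) =>
            (¬ (2 * k < 3 * p.1.card)) ∧ p.2 ⊆ p.1) := by
      rw [pairs, Finset.filter_filter]
      apply Finset.filter_congr
      intro p _
      constructor
      · rintro ⟨h, h'⟩; exact ⟨by omega, h⟩
      · rintro ⟨h, h'⟩; exact ⟨h', by omega⟩
    have hlow : ∑ S ∈ univ.filter (fun S => ¬ (2 * k < 3 * S.card)),
        c S * ∏ i ∈ S, (xv i + zv i)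
      = ∑ p ∈ (pairs k).filter (fun p => 3 * p.1.card ≤ 2 * k), F p := by
      calc ∑ S ∈ univ.filter (fun S => ¬ (2 * k < 3 * S.card)),
            c S * ∏ i ∈ S, (xv i + zv i)
          = ∑ S : Finset (Fin k),
              if ¬ (2 * k < 3 * S.card) then c S * ∏ i ∈ S, (xv i + zv i) else 0 :=
            Finset.sum_filter _ _
        _ = ∑ S : Finset (Fin k), ∑ A : Finset (Fin k),
              if (¬ (2 * k < 3 * S.card)) ∧ A ⊆ S then F (S, A) else 0 := by
            refine Finset.sum_congr rfl fun S _ => ?_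
            by_cases hS : 2 * k < 3 * S.card
            · simp [hS]
            · rw [if_pos hS]
              have hexp : c S * ∏ i ∈ S, (xv i + zv i) = ∑ A ∈ S.powerset, F (S, A) := by
                rw [Finset.prod_add, Finset.mul_sum]
              rw [hexp, powerset_eq_filter, Finset.sum_filter]
              refine Finset.sum_congr rfl fun A _ => ?_
              by_cases hA : A ⊆ S <;> simp [hA, hS]
        _ = ∑ p : Finset (Fin k) × Finset (Fin k),
              if (¬ (2 * k < 3 * p.1.card)) ∧ p.2 ⊆ p.1 then F p else 0 :=
            (Fintype.sum_prod_type (fun p : Finset (Fin k) × Finset (Fin k) => if (¬ (2 * k < 3 * p.1.card)) ∧ p.2 ⊆ p.1 then F p else 0)).symm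
        _ = ∑ p ∈ univ.filter (fun p : Finset (Fin k) × Finset (Fin k) =>
              (¬ (2 * k < 3 * p.1.card)) ∧ p.2 ⊆ p.1), F p := (Finset.sum_filter _ _).symm
        _ = ∑ p ∈ (pairs k).filter (fun p => 3 * p.1.card ≤ 2 * k), F p := by rw [h2]
    rw [hlow]
    rw [← Finset.sum_filter_add_sum_filter_not ((pairs k).filter (fun p => 3 * p.1.card ≤ 2 * k))
        (fun p => 3 * (p.1 \ p.2).card ≤ k) F]
    congr 1
    -- Part 2
    · rw [← Finset.sum_fiberwise_of_maps_to (g := fun p => p.1 \ p.2)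
        (t := univ.filter (fun B : Finset (Fin k) => 3 * B.card ≤ k)) ?_ F]
      · have hsub2 : ∑ B ∈ univ.filter (fun B : Finset (Fin k) => 3 * B.card ≤ k),
              (∏ i ∈ B, zv i) * alph c xv B
            = ∑ C : Sm k, (∏ i ∈ C.val, zv i) * alph c xv C.val :=
          Finset.sum_subtype (p := fun B : Finset (Fin k) => 3 * B.card ≤ k) (univ.filter (fun B : Finset (Fin k) => 3 * B.card ≤ k)) (fun B => by simp) (fun B => (∏ i ∈ B, zv i) * alph c xv B)
        rw [← hsub2]
        refine Finset.sum_congr rfl fun B hB => ?_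
        have hBk : 3 * B.card ≤ k := by simpa using hB
        have hfil : (((pairs k).filter (fun p => 3 * p.1.card ≤ 2 * k)).filter
              (fun p => 3 * (p.1 \ p.2).card ≤ k)).filter (fun p => p.1 \ p.2 = B)
            = (pairs k).filter (fun p => 3 * p.1.card ≤ 2 * k ∧ p.1 \ p.2 = B) := by
          rw [Finset.filter_filter, Finset.filter_filter]
          apply Finset.filter_congr
          intro p _
          constructor
          · rintro ⟨h1, _, h3⟩; exact ⟨h1, h3⟩
          · rintro ⟨h1, h3⟩; exact ⟨h1, by rw [h3]; exact hBk, h3⟩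
        rw [hfil, alph, Finset.mul_sum]
        refine Finset.sum_congr rfl fun p hp => ?_
        have hd : p.1 \ p.2 = B := (Finset.mem_filter.1 hp).2.2
        simp only [hF, hd]
        ring
      · intro p hp
        have := (Finset.mem_filter.1 hp).2
        simpa using this
    -- Part 3
    · rw [← Finset.sum_fiberwise_of_maps_to (g := fun p => p.2)
        (t := univ.filter (fun B : Finset (Fin k) => 3 * B.card ≤ k)) ?_ F]
      · have hsub3 : ∑ A ∈ univ.filter (fun B : Finset (Fin k) => 3 * B.card ≤ k),
              (∏ i ∈ A, xv i) * beth c zv A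
            = ∑ C : Sm k, (∏ i ∈ C.val, xv i) * beth c zv C.val :=
          Finset.sum_subtype (p := fun B : Finset (Fin k) => 3 * B.card ≤ k) (univ.filter (fun B : Finset (Fin k) => 3 * B.card ≤ k)) (fun B => by simp) (fun A => (∏ i ∈ A, xv i) * beth c zv A)
        rw [← hsub3]
        refine Finset.sum_congr rfl fun A hA => ?_
        have hfil : (((pairs k).filter (fun p => 3 * p.1.card ≤ 2 * k)).filter
              (fun p => ¬ (3 * (p.1 \ p.2).card ≤ k))).filter (fun p => p.2 = A)
            = (pairs k).filter
              (fun p => 3 * p.1.card ≤ 2 * k ∧ ¬ (3 * (p.1 \ p.2).card ≤ k) ∧ p.2 = A) := by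
          rw [Finset.filter_filter, Finset.filter_filter]
        rw [hfil, beth, Finset.mul_sum]
        refine Finset.sum_congr rfl fun p hp => ?_
        have hd : p.2 = A := (Finset.mem_filter.1 hp).2.2.2
        simp only [hF, hd]
        ring
      · intro p hp
        simp only [Finset.mem_filter] at hp
        obtain ⟨⟨hpair, _⟩, hns⟩ := hp
        have hsub : p.2 ⊆ p.1 := by simpa [pairs] using hpair
        have hcd : (p.1 \ p.2).card + p.2.card = p.1.card :=
          Finset.card_sdiff_add_card_eq_card hsub
        simp only [Finset.mem_filter, Finset.mem_univ, true_and]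
        omega

open Finset

lemma card_Sm (k : ℕ) :
    Fintype.card (Sm k) = ∑ d ∈ Finset.range (k / 3 + 1), Nat.choose k d := by
  classical
  have hdm := Nat.div_add_mod k 3
  have hml : k % 3 < 3 := Nat.mod_lt _ (by norm_num)
  rw [Fintype.card_subtype]
  rw [Finset.card_eq_sum_card_fiberwise (f := Finset.card)
      (t := Finset.range (k / 3 + 1)) ?_]
  · refine Finset.sum_congr rfl fun d hd => ?_
    rw [Finset.mem_range] at hd
    have hd3 : 3 * d ≤ k := by omega
    have hfib : (univ.filter (fun B : Finset (Fin k) => 3 * B.card ≤ k)).filter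
          (fun B => B.card = d) = Finset.powersetCard d univ := by
      rw [Finset.filter_filter]
      ext B
      simp only [Finset.mem_filter, Finset.mem_univ, true_and,
        Finset.mem_powersetCard_univ]
      constructor
      · rintro ⟨_, h⟩; exact h
      · intro h; exact ⟨by omega, h⟩
    rw [hfib, Finset.card_powersetCard, Finset.card_univ, Fintype.card_fin]
  · intro B hB
    rw [Finset.mem_coe, Finset.mem_filter] at hB
    rw [Finset.mem_coe, Finset.mem_range]
    omega

end XorAux

open XorAux in
/-- The predicate `T'(x,y,z) = y(x ⊕ z)` (with `y ∈ B^(2^k)` viewed as a function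
`B^k → Bool` via a bijection `e`, and `⊕` the bitwise XOR) has decomposition
complexity at most `2k + 4·∑_{d=0}^{⌊k/3⌋} C(k,d)`. -/
theorem xor_indexing_upper_bound (k : ℕ) (e : BS k ≃ Fin (2 ^ k)) :
    DecompBound
      (fun (x : BS k) (y : BS (2 ^ k)) (z : BS k) => y (e (fun i => xor (x i) (z i))))
      (2 * k + 4 * ∑ d ∈ Finset.range (k / 3 + 1), Nat.choose k d) := by
  classical
  set N := ∑ d ∈ Finset.range (k / 3 + 1), Nat.choose k d with hN
  have hcard : Fintype.card (Sm k) = N := by rw [card_Sm k]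
  have hU : Fintype.card (BS k × ((Sm k → ZMod 2) × (Sm k → ZMod 2)))
      = Fintype.card (BS (k + (N + N))) := by
    simp [Fintype.card_fun, hcard]
    ring
  have hV : Fintype.card (BS k × (Sm k → ZMod 2)) = Fintype.card (BS (k + N)) := by
    simp [Fintype.card_fun, hcard]
    ring
  obtain ⟨eU⟩ : Nonempty ((BS k × ((Sm k → ZMod 2) × (Sm k → ZMod 2))) ≃ BS (k + (N + N))) :=
    ⟨Fintype.equivOfCardEq hU⟩
  obtain ⟨eV⟩ : Nonempty ((BS k × (Sm k → ZMod 2)) ≃ BS (k + N)) :=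
    ⟨Fintype.equivOfCardEq hV⟩
  refine ⟨k + (N + N), k + N, by omega, ?_⟩
  refine ⟨fun x y => eU (x,
      (fun C => alph (coeffs (fun W => bz (y (e (chi W))))) (fun i => bz (x i)) C.val,
       fun C => coeffs (fun W => bz (y (e (chi W)))) (C.valᶜ))),
    fun y z => eV (z,
      fun C => beth (coeffs (fun W => bz (y (e (chi W))))) (fun i => bz (z i)) C.val),
    fun um vm =>
      zb ((∑ C : Sm k, if 2 * k < 3 * (C.valᶜ).card then
            (eU.symm um).2.2 C *
              ∏ i ∈ C.valᶜ, (bz ((eU.symm um).1 i) + bz ((eV.symm vm).1 i)) else 0)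
        + ((∑ C : Sm k, (∏ i ∈ C.val, bz ((eV.symm vm).1 i)) * (eU.symm um).2.1 C)
          + (∑ C : Sm k, (∏ i ∈ C.val, bz ((eU.symm um).1 i)) * (eV.symm vm).2 C))),
    ?_⟩
  intro x y z
  simp only [Equiv.symm_apply_apply]
  rw [← key (coeffs (fun W => bz (y (e (chi W))))) (fun i => bz (x i)) (fun i => bz (z i))]
  have hprod : ∀ S : Finset (Fin k),
      coeffs (fun W => bz (y (e (chi W)))) S * (∏ i ∈ S, (bz (x i) + bz (z i)))
      = coeffs (fun W => bz (y (e (chi W)))) S * ∏ i ∈ S, bz (xor (x i) (z i)) := by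
    intro S
    congr 1
    exact Finset.prod_congr rfl fun i _ => (bz_xor _ _).symm
  rw [Finset.sum_congr rfl (fun S _ => hprod S)]
  rw [eval (fun W => bz (y (e (chi W)))) (fun i => xor (x i) (z i))]
  rw [chi_supp, zb_bz]
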